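/- Let 0 = t_0 < t_1 < ⋯ < t_N be a partition of [0,T] with step sizes τ_k = t_k − t_{k−1}, let 0 < α < 1, and let a^{(n)}_{n−k} be the nonuniform L1 weights and P^{(n)}_{n−k} the complementary discrete convolution kernels. Then the discrete orthogonality relation holds: for all 1 ≤ k ≤ n ≤ N, Σ_{j=k}^{n} P^{(n)}_{n−j} a^{(j)}_{j−k} = 1. -/

import Mathlib

/-- `β_ν(t) = t^(ν-1)/Γ(ν)`. -/
noncomputable def betaK (ν t : ℝ) : ℝ := t ^ (ν - 1) / Real.Gamma ν

theorem stmt_3 (T : ℝ) (N : ℕ) (hN : 1 ≤ N) (t : ℕ → ℝ) (α : ℝ)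
    (hα0 : 0 < α) (hα1 : α < 1)
    (ht0 : t 0 = 0) (htN : t N = T)
    (hmono : ∀ i j : ℕ, i < j → j ≤ N → t i < t j)
    (a : ℕ → ℕ → ℝ)
    (ha : ∀ n k : ℕ, 1 ≤ k → k ≤ n → n ≤ N →
      a n (n - k) =
        (betaK (2 - α) (t n - t (k - 1)) - betaK (2 - α) (t n - t k)) / (t k - t (k - 1)))
    (P : ℕ → ℕ → ℝ)
    (hP0 : ∀ n : ℕ, 1 ≤ n → n ≤ N → P n 0 = 1 / a n 0)
    (hPrec : ∀ n k : ℕ, 1 ≤ k → k + 1 ≤ n → n ≤ N →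
      P n (n - k) = (1 / a k 0) *
        ∑ j ∈ Finset.Icc (k + 1) n, (a j (j - k - 1) - a j (j - k)) * P n (n - j)) :
    ∀ n k : ℕ, 1 ≤ k → k ≤ n → n ≤ N →
      ∑ j ∈ Finset.Icc k n, P n (n - j) * a j (j - k) = 1 := by
  -- positivity of a k 0
  have hapos : ∀ k : ℕ, 1 ≤ k → k ≤ N → 0 < a k 0 := by
    intro k hk1 hkN
    have h := ha k k hk1 le_rfl hkN
    rw [Nat.sub_self] at h
    rw [h]
    have hτ : 0 < t k - t (k - 1) := by
      have := hmono (k - 1) k (Nat.sub_lt hk1 one_pos) hkN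
      linarith
    have hG : 0 < Real.Gamma (2 - α) := Real.Gamma_pos_of_pos (by linarith)
    have h0 : betaK (2 - α) (t k - t k) = 0 := by
      simp only [betaK, sub_self]
      rw [Real.zero_rpow (by norm_num; linarith : (2:ℝ) - α - 1 ≠ 0)]
      simp
    rw [h0, sub_zero]
    apply div_pos _ hτ
    unfold betaK
    exact div_pos (Real.rpow_pos_of_pos hτ _) hG
  intro n k hk1 hkn hnN
  have hn1 : 1 ≤ n := le_trans hk1 hkn
  -- downward induction: parametrize by d = n - k
  obtain ⟨d, hd⟩ : ∃ d, k + d = n := ⟨n - k, by omega⟩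
  clear htN ht0 hN hα0 hα1
  induction d generalizing k with
  | zero =>
    have hk : k = n := by omega
    subst hk
    rw [Finset.Icc_self, Finset.sum_singleton, Nat.sub_self, hP0 k hk1 hnN]
    have := (hapos k hk1 hnN).ne'
    field_simp
  | succ d ih =>
    have hk1n : k + 1 ≤ n := by omega
    have hsplit : Finset.Icc k n = insert k (Finset.Icc (k + 1) n) := by
      exact (Finset.insert_Icc_add_one_left_eq_Icc hkn).symm
    rw [hsplit, Finset.sum_insert (by simp), Nat.sub_self]
    have hPk : P n (n - k) * a k 0 =
        ∑ j ∈ Finset.Icc (k + 1) n, (a j (j - k - 1) - a j (j - k)) * P n (n - j) := by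
      rw [hPrec n k hk1 hk1n hnN]
      have := (hapos k hk1 (le_trans (le_trans hkn hnN) le_rfl)).ne'
      field_simp
    calc P n (n - k) * a k 0 + ∑ j ∈ Finset.Icc (k + 1) n, P n (n - j) * a j (j - k)
        = ∑ j ∈ Finset.Icc (k + 1) n, ((a j (j - k - 1) - a j (j - k)) * P n (n - j)
            + P n (n - j) * a j (j - k)) := by
          rw [hPk, Finset.sum_add_distrib]
      _ = ∑ j ∈ Finset.Icc (k + 1) n, P n (n - j) * a j (j - (k + 1)) := by
          apply Finset.sum_congr rfl
          intro j _
          have : j - k - 1 = j - (k + 1) := by omega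
          rw [this]; ring
      _ = 1 := ih (k + 1) (by omega) hk1n (by omega)
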